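/- Let V be a finite-dimensional vector space over ℚ and let u : V → V be a linear endomorphism. Then in the ring of formal power series ℚ[[z]] one has det(id_V − z·u) · exp( Σ_{m≥1} (tr(u^m)/m) · z^m ) = 1, where det(id_V − z·u) denotes the polynomial in z given by the determinant of id_V − z·u, regarded as a formal power series. -/

import Mathlib

/-- The exponential of a formal power series over ℚ (the usual exponential series;
for a series with zero constant term, `coeff n (S ^ k) = 0` for `k > n`, so the
finite sum below computes `Σ_{k ≥ 0} S^k / k!`). -/
noncomputable def expPS (S : PowerSeries ℚ) : PowerSeries ℚ :=
  PowerSeries.mk fun n =>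
    ∑ k ∈ Finset.range (n + 1), (PowerSeries.coeff n (S ^ k)) / (Nat.factorial k : ℚ)

/-- `det(id - z • u)` as a polynomial in `z`: the reverse characteristic polynomial
of the endomorphism `u`. -/
noncomputable def detOneSubZ {V : Type*} [AddCommGroup V] [Module ℚ V] [FiniteDimensional ℚ V]
    (u : V →ₗ[ℚ] V) : Polynomial ℚ :=
  Matrix.det (1 - (Polynomial.X : Polynomial ℚ) •
    ((LinearMap.toMatrix (Module.finBasis ℚ V) (Module.finBasis ℚ V) u).map Polynomial.C))

namespace Stmt3Aux

open PowerSeries Matrix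

variable {A : Type*} [CommRing A] [Algebra ℚ A]


lemma deriv_prod (d : Derivation ℚ A A) {ι : Type*} [DecidableEq ι]
    (s : Finset ι) (f : ι → A) :
    d (∏ i ∈ s, f i) = ∑ i ∈ s, (∏ j ∈ s.erase i, f j) * d (f i) := by
  induction s using Finset.induction_on with
  | empty => simp
  | @insert a s ha ih =>
    
    rw [Finset.prod_insert ha, Derivation.leibniz, smul_eq_mul, smul_eq_mul, ih,
      Finset.mul_sum, Finset.sum_insert ha, Finset.erase_insert ha, add_comm]
    congr 1
    refine Finset.sum_congr rfl fun i hi => ?_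
    have hia : a ≠ i := fun h => ha (h ▸ hi)
    have hanotin : a ∉ s.erase i := fun h => ha (Finset.erase_subset _ _ h)
    rw [Finset.erase_insert_of_ne hia, Finset.prod_insert hanotin]
    ring

lemma det_updateRow_eq_sum {N : ℕ} (M : Matrix (Fin N) (Fin N) A) (i : Fin N) (b : Fin N → A) :
    (M.updateRow i b).det = ∑ j, b j * M.adjugate j i := by
  rw [← Matrix.det_transpose, ← Matrix.updateCol_transpose, ← Matrix.cramer_apply]
  have hb : b = ∑ j : Fin N, Pi.single j (b j) := (Finset.univ_sum_single b).symm
  rw [hb, map_sum, Finset.sum_apply]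
  refine Finset.sum_congr rfl fun j _ => ?_
  have h1 : (Pi.single j (b j) : Fin N → A) = b j • (Pi.single j 1 : Fin N → A) := by
    rw [← Pi.single_smul, smul_eq_mul, mul_one]
  rw [h1, LinearMap.map_smul]
  have h2 : Matrix.cramer Mᵀ (Pi.single j 1) i = M.adjugate j i := rfl
  rw [Pi.smul_apply, h2, smul_eq_mul, ← hb]

lemma jacobi (d : Derivation ℚ A A) {N : ℕ} (M : Matrix (Fin N) (Fin N) A) :
    d M.det = ∑ i, (M.updateRow i (fun j => d (M i j))).det := by
  have hd : ∀ (z : ℤˣ) (x : A), d (z • x) = z • d x := fun z x => by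
    rw [Units.smul_def, Units.smul_def, map_zsmul]
  rw [Matrix.det_apply, map_sum]
  simp_rw [Matrix.det_apply]
  rw [Finset.sum_comm]
  refine Finset.sum_congr rfl fun σ _ => ?_
  rw [hd, deriv_prod, Finset.smul_sum]
  rw [← Equiv.sum_comp σ (fun i => Equiv.Perm.sign σ •
      ∏ k, (M.updateRow i (fun j => d (M i j))) (σ k) k)]
  refine Finset.sum_congr rfl fun m _ => ?_
  congr 1
  have hrow : ∀ k, (M.updateRow (σ m) (fun j => d (M (σ m) j))) (σ k) k
      = if k = m then d (M (σ m) k) else M (σ k) k := by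
    intro k
    rw [Matrix.updateRow_apply]
    simp [EmbeddingLike.apply_eq_iff_eq]
  calc (∏ j ∈ Finset.univ.erase m, M (σ j) j) * d (M (σ m) m)
      = d (M (σ m) m) * ∏ j ∈ Finset.univ.erase m, M (σ j) j := mul_comm _ _
    _ = (fun k => if k = m then d (M (σ m) k) else M (σ k) k) m *
        ∏ j ∈ Finset.univ.erase m, (fun k => if k = m then d (M (σ m) k) else M (σ k) k) j := by
        simp only [if_pos rfl]
        congr 1
        refine (Finset.prod_congr rfl fun j hj => ?_).symm
        simp only [if_neg (Finset.ne_of_mem_erase hj)]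
    _ = ∏ k, (fun k => if k = m then d (M (σ m) k) else M (σ k) k) k := by
        exact Finset.mul_prod_erase Finset.univ (fun k => if k = m then d (M (σ m) k) else M (σ k) k) (Finset.mem_univ m)
    _ = ∏ k, (M.updateRow (σ m) (fun j => d (M (σ m) j))) (σ k) k :=
        Finset.prod_congr rfl fun k _ => (hrow k).symm


lemma coeff_pow_eq_zero {S : PowerSeries ℚ} (hS : constantCoeff (R := ℚ) S = 0) {k n : ℕ}
    (h : n < k) : PowerSeries.coeff n (S ^ k) = 0 := by
  have hX : (X : PowerSeries ℚ) ^ k ∣ S ^ k :=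
    pow_dvd_pow_of_dvd (X_dvd_iff.mpr hS) k
  exact X_pow_dvd_iff.mp hX n h

noncomputable def expPartial (S : PowerSeries ℚ) (N : ℕ) : PowerSeries ℚ :=
  ∑ k ∈ Finset.range (N + 1), ((Nat.factorial k : ℚ))⁻¹ • S ^ k

lemma coeff_expPS {S : PowerSeries ℚ} (hS : constantCoeff (R := ℚ) S = 0) {m N : ℕ} (h : m ≤ N) :
    PowerSeries.coeff m (expPS S) = PowerSeries.coeff m (expPartial S N) := by
  rw [expPS, coeff_mk, expPartial, map_sum]
  have h1 : ∀ k ∈ Finset.range (m + 1),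
      PowerSeries.coeff m (S ^ k) / (Nat.factorial k : ℚ)
        = PowerSeries.coeff m (((Nat.factorial k : ℚ))⁻¹ • S ^ k) := by
    intro k _
    rw [_root_.map_smul, smul_eq_mul, div_eq_inv_mul]
  rw [Finset.sum_congr rfl h1]
  refine Finset.sum_subset (Finset.range_subset_range.mpr (by omega)) ?_
  intro k _ hk
  have hmk : m < k := by
    simp only [Finset.mem_range, not_lt] at hk
    omega
  rw [_root_.map_smul, coeff_pow_eq_zero hS hmk, smul_zero]

lemma deriv_expPartial (S : PowerSeries ℚ) (N : ℕ) :
    d⁄dX ℚ (expPartial S (N + 1)) = d⁄dX ℚ S * expPartial S N := by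
  rw [expPartial, map_sum, Finset.sum_range_succ']
  have h0 : d⁄dX ℚ (((Nat.factorial 0 : ℚ))⁻¹ • S ^ 0) = 0 := by
    simp
  rw [h0, add_zero]
  have h1 : ∀ i, d⁄dX ℚ (((Nat.factorial (i + 1) : ℚ))⁻¹ • S ^ (i + 1))
      = ((Nat.factorial i : ℚ))⁻¹ • (S ^ i * d⁄dX ℚ S) := by
    intro i
    rw [Derivation.map_smul, Derivation.leibniz_pow]
    have h2 : ((i + 1 : ℕ) • (S ^ (i + 1 - 1) • d⁄dX ℚ S)) =
        ((i + 1 : ℚ)) • (S ^ i * d⁄dX ℚ S) := by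
      rw [← Nat.cast_smul_eq_nsmul ℚ]
      norm_num [smul_eq_mul]
    rw [h2, smul_smul]
    congr 1
    rw [Nat.factorial_succ]
    push_cast
    rw [mul_inv]
    have hi : ((i : ℚ) + 1) ≠ 0 := by positivity
    field_simp
  rw [Finset.sum_congr rfl fun i _ => h1 i]
  conv_rhs => rw [expPartial, mul_comm, Finset.sum_mul]
  exact Finset.sum_congr rfl fun i _ => (smul_mul_assoc _ _ _).symm

lemma deriv_expPS {S : PowerSeries ℚ} (hS : constantCoeff (R := ℚ) S = 0) :
    d⁄dX ℚ (expPS S) = d⁄dX ℚ S * expPS S := by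
  ext n
  rw [coeff_derivative, coeff_expPS hS (le_refl (n + 1)), ← coeff_derivative,
    deriv_expPartial]
  rw [PowerSeries.coeff_mul, PowerSeries.coeff_mul]
  refine Finset.sum_congr rfl fun p hp => ?_
  have hple : p.2 ≤ n := by
    have := Finset.HasAntidiagonal.mem_antidiagonal.mp hp
    omega
  rw [coeff_expPS hS hple]

lemma constCoeff_expPS {S : PowerSeries ℚ} :
    constantCoeff (R := ℚ) (expPS S) = 1 := by
  rw [← PowerSeries.coeff_zero_eq_constantCoeff_apply, expPS, coeff_mk]
  simp

end Stmt3Aux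

open PowerSeries Stmt3Aux in
/-- In `ℚ[[z]]`, `det(id - z•u) · exp( Σ_{m ≥ 1} tr(u^m)/m · z^m ) = 1`. -/
theorem stmt_3 {V : Type*} [AddCommGroup V] [Module ℚ V] [FiniteDimensional ℚ V]
    (u : V →ₗ[ℚ] V) :
    (↑(detOneSubZ u) : PowerSeries ℚ) *
      expPS (PowerSeries.mk fun m =>
        if m = 0 then 0 else LinearMap.trace ℚ V (u ^ m) / (m : ℚ)) = 1 := by
  classical
  set b := Module.finBasis ℚ V with hb
  set A : Matrix (Fin (Module.finrank ℚ V)) (Fin (Module.finrank ℚ V)) ℚ :=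
    LinearMap.toMatrix b b u with hA
  set S : PowerSeries ℚ := PowerSeries.mk fun m =>
    if m = 0 then 0 else LinearMap.trace ℚ V (u ^ m) / (m : ℚ) with hSdef
  have hS0 : constantCoeff (R := ℚ) S = 0 := by
    rw [hSdef]
    simp [← coeff_zero_eq_constantCoeff_apply]
  set B : Matrix _ _ (PowerSeries ℚ) := A.map (PowerSeries.C (R := ℚ)) with hB
  set M : Matrix _ _ (PowerSeries ℚ) := 1 - (PowerSeries.X : PowerSeries ℚ) • B with hM
  -- trace of powers
  have htr : ∀ m : ℕ, LinearMap.trace ℚ V (u ^ m) = Matrix.trace (A ^ m) := by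
    intro m
    rw [LinearMap.trace_eq_matrix_trace ℚ b, ← LinearMap.toMatrix_pow]
  -- the coercion of detOneSubZ is det M
  have hPM : ((detOneSubZ u : Polynomial ℚ) : PowerSeries ℚ) = M.det := by
    have h0 : ((detOneSubZ u : Polynomial ℚ) : PowerSeries ℚ)
        = (Polynomial.coeToPowerSeries.ringHom : Polynomial ℚ →+* PowerSeries ℚ)
          (detOneSubZ u) := rfl
    rw [h0, detOneSubZ, RingHom.map_det]
    congr 1
    ext i j
    simp only [RingHom.mapMatrix_apply, Matrix.map_apply, Matrix.sub_apply, Matrix.smul_apply,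
      smul_eq_mul, map_sub, map_mul, hM, hB, Matrix.one_apply, apply_ite
        (Polynomial.coeToPowerSeries.ringHom : Polynomial ℚ →+* PowerSeries ℚ), map_one, map_zero,
      Polynomial.coeToPowerSeries.ringHom_apply, Polynomial.coe_X, Polynomial.coe_C]
    rfl
  -- the geometric series matrix
  set NN : Matrix _ _ (PowerSeries ℚ) :=
    Matrix.of (fun i j => PowerSeries.mk fun m => (A ^ (m + 1)) i j) with hNN
  have hMN : M * NN = B := by
    have hexp : M * NN = NN - (PowerSeries.X : PowerSeries ℚ) • (B * NN) := by
      rw [hM, sub_mul, one_mul, Matrix.smul_mul]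
    rw [hexp]
    refine Matrix.ext fun i j => ?_
    rw [Matrix.sub_apply, Matrix.smul_apply]
    ext m
    rw [map_sub]
    cases m with
    | zero =>
      simp [hNN, hB, smul_eq_mul, Matrix.map_apply]
    | succ m =>
      have hc1 : PowerSeries.coeff (m + 1) (NN i j) = (A ^ (m + 2)) i j := by
        simp [hNN]
      have hc2 : PowerSeries.coeff (m + 1)
          ((PowerSeries.X : PowerSeries ℚ) • (B * NN) i j)
          = (A ^ (m + 2)) i j := by
        rw [smul_eq_mul, PowerSeries.coeff_succ_X_mul, Matrix.mul_apply, map_sum]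
        have hk : ∀ k, PowerSeries.coeff m (B i k * NN k j)
            = A i k * (A ^ (m + 1)) k j := by
          intro k
          rw [hB]
          simp only [Matrix.map_apply]
          rw [PowerSeries.coeff_C_mul]
          simp [hNN]
        rw [Finset.sum_congr rfl fun k _ => hk k, ← Matrix.mul_apply]
        have hpow : A * A ^ (m + 1) = A ^ (m + 2) := (pow_succ' A (m + 1)).symm
        rw [hpow]
      rw [hc1, hc2, sub_self]
      have hBc : PowerSeries.coeff (m + 1) (B i j) = 0 := by
        rw [hB]
        simp [Matrix.map_apply, PowerSeries.coeff_C]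
      rw [hBc]
  -- trace of NN is the derivative of S
  have hdS : d⁄dX ℚ S = Matrix.trace NN := by
    ext m
    rw [coeff_derivative, hSdef, coeff_mk]
    have hm1 : (m + 1 : ℕ) ≠ 0 := by omega
    rw [if_neg hm1]
    have hne : ((m : ℚ) + 1) ≠ 0 := by positivity
    rw [htr (m + 1)]
    push_cast
    rw [div_mul_cancel₀ _ hne]
    rw [Matrix.trace, Matrix.trace, map_sum]
    refine Finset.sum_congr rfl fun i _ => ?_
    simp [hNN, Matrix.diag_apply]
  -- derivative of entries of M
  have hdM : ∀ i j, d⁄dX ℚ (M i j) = -(B i j) := by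
    intro i j
    rw [hM, Matrix.sub_apply, Matrix.smul_apply, map_sub, smul_eq_mul,
      Derivation.leibniz, hB]
    simp only [Matrix.map_apply, derivative_C, smul_zero, derivative_X, smul_eq_mul,
      mul_one, zero_add, Matrix.one_apply]
    split_ifs <;> simp
  -- Jacobi's formula gives the derivative of det M
  have hdP : d⁄dX ℚ M.det = -(M.det * d⁄dX ℚ S) := by
    calc d⁄dX ℚ M.det = ∑ i, (M.updateRow i fun j => d⁄dX ℚ (M i j)).det := jacobi _ M
      _ = -Matrix.trace (B * M.adjugate) := by
          rw [Matrix.trace, ← Finset.sum_neg_distrib]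
          refine Finset.sum_congr rfl fun i _ => ?_
          rw [det_updateRow_eq_sum, Matrix.diag_apply, Matrix.mul_apply,
            ← Finset.sum_neg_distrib]
          exact Finset.sum_congr rfl fun j _ => by rw [hdM i j, neg_mul]
      _ = -(M.det * d⁄dX ℚ S) := by
          rw [← hMN, Matrix.trace_mul_comm, ← Matrix.mul_assoc, Matrix.adjugate_mul,
            Matrix.smul_mul, one_mul, Matrix.trace_smul, smul_eq_mul, hdS]
  -- conclude via uniqueness of solutions of the ODE
  have hkey : d⁄dX ℚ (((detOneSubZ u : Polynomial ℚ) : PowerSeries ℚ) * expPS S)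
      = d⁄dX ℚ (1 : PowerSeries ℚ) := by
    rw [Derivation.leibniz, deriv_expPS hS0, hPM, hdP, Derivation.map_one_eq_zero]
    rw [smul_eq_mul, smul_eq_mul]
    ring
  have hconst : constantCoeff (R := ℚ) (((detOneSubZ u : Polynomial ℚ) : PowerSeries ℚ) * expPS S)
      = constantCoeff (R := ℚ) (1 : PowerSeries ℚ) := by
    rw [map_mul, constCoeff_expPS, mul_one, hPM, map_one]
    have h3 : (constantCoeff (R := ℚ)) M.det
        = Matrix.det ((constantCoeff (R := ℚ)).mapMatrix M) := RingHom.map_det _ _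
    rw [h3]
    have hMap : ((constantCoeff (R := ℚ)).mapMatrix M) = 1 := by
      ext i j
      simp only [RingHom.mapMatrix_apply, Matrix.map_apply, hM, hB, Matrix.sub_apply,
        Matrix.smul_apply, smul_eq_mul, map_sub, map_mul, constantCoeff_X, zero_mul,
        sub_zero, Matrix.one_apply, apply_ite (constantCoeff (R := ℚ)), map_one, map_zero]
    rw [hMap, Matrix.det_one]
  exact derivative.ext hkey hconst
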